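/- Under the hypotheses of the local limit lemma — namely Z a non-constant square-integrable nonnegative integer random variable of span 1, (Z^(n)) nonnegative integer random variables of span 1 with ‖φ_{Z^(n)} − φ_Z‖_∞ → 0, E[Z^(n)] = p_n/q_n → p/q = E[Z], Var(Z^(n)) → Var(Z) =: σ_Z², and sup_n E|Z^(n) − p_n/q_n|³ < ∞ — there exist δ ∈ (0, π) and N ∈ ℕ such that for all n ≥ N and all t with |t| < δ: |E[exp(it(Z^(n) − p_n/q_n))]| ≤ 1 − σ_Z² t² / 4. -/

import Mathlib

open MeasureTheory ProbabilityTheory Real Filter Topology Set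
open scoped ENNReal NNReal

variable {Ω : Type*} [MeasurableSpace Ω]

/-- cumulant generating function -/
noncomputable def psi (μ : Measure Ω) (Z : Ω → ℝ) (t : ℝ) : ℝ :=
  Real.log (∫ ω, Real.exp (t * Z ω) ∂μ)

/-- effective domain of the cgf -/
def psiDom (μ : Measure Ω) (Z : Ω → ℝ) : Set ℝ :=
  {t | Integrable (fun ω => Real.exp (t * Z ω)) μ}

/-- Fenchel-Legendre transform of the cgf (with `ψ = +∞` outside its domain). -/
noncomputable def psiStar (μ : Measure Ω) (Z : Ω → ℝ) (x : ℝ) : EReal :=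
  ⨆ t ∈ psiDom μ Z, ((t * x - psi μ Z t : ℝ) : EReal)

/-- joint cgf of a pair -/
noncomputable def psi2 (μ : Measure Ω) (Z W : Ω → ℝ) (v : ℝ × ℝ) : ℝ :=
  Real.log (∫ ω, Real.exp (v.1 * Z ω + v.2 * W ω) ∂μ)

def psi2Dom (μ : Measure Ω) (Z W : Ω → ℝ) : Set (ℝ × ℝ) :=
  {v | Integrable (fun ω => Real.exp (v.1 * Z ω + v.2 * W ω)) μ}

noncomputable def psi2Star (μ : Measure Ω) (Z W : Ω → ℝ) (x y : ℝ) : EReal :=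
  ⨆ v ∈ psi2Dom μ Z W, ((v.1 * x + v.2 * y - psi2 μ Z W v : ℝ) : EReal)

/-- the set `R_Z`: interior of the range of `ψ'_Z`. -/
def RSet (μ : Measure Ω) (Z : Ω → ℝ) : Set ℝ :=
  interior {x | ∃ t ∈ interior (psiDom μ Z), HasDerivAt (psi μ Z) x t}

/-- support of the law of an ℕ-valued random variable -/
def nsupport (μ : Measure Ω) (Z : Ω → ℕ) : Set ℕ := {k | μ {ω | Z ω = k} ≠ 0}

/-- span of an ℕ-valued random variable -/
noncomputable def span (μ : Measure Ω) (Z : Ω → ℕ) : ℕ :=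
  sSup {m : ℕ | ∃ b : ℕ, nsupport μ Z ⊆ {k | ∃ j : ℕ, k = m * j + b}}

/-- essential smoothness of a function `f` with effective domain `D` -/
def EssSmooth (f : ℝ × ℝ → ℝ) (D : Set (ℝ × ℝ)) : Prop :=
  (interior D).Nonempty ∧ (∀ v ∈ interior D, DifferentiableAt ℝ f v) ∧
    ∀ c ∈ frontier D, Tendsto (fun v => ‖fderiv ℝ f v‖) (𝓝[interior D] c) atTop

/-- Large deviation principle for a sequence of laws on ℝ with speed `a` and rate `I`. -/
def HasLDP (R : ℕ → Measure ℝ) (a : ℕ → ℝ) (I : ℝ → EReal) : Prop :=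
  LowerSemicontinuous I ∧ (∀ x, 0 ≤ I x) ∧
    ∀ A : Set ℝ,
      -(⨅ x ∈ interior A, I x) ≤
          liminf (fun n => (a n : EReal) * ENNReal.log (R n A)) atTop ∧
        limsup (fun n => (a n : EReal) * ENNReal.log (R n A)) atTop ≤
          -(⨅ x ∈ closure A, I x)

/-- a good rate function has compact sublevel sets -/
def GoodRate (I : ℝ → EReal) : Prop := ∀ c : ℝ, IsCompact {x | I x ≤ (c : EReal)}

/-- tilted measure: the law of `(X̌_ξ, Y̌_ξ)` is that of `(X,Y)` under `tilt μ X ξ`. -/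
noncomputable def tilt (μ : Measure Ω) (X : Ω → ℕ) (ξ : ℝ) : Measure Ω :=
  μ.withDensity fun ω => ENNReal.ofReal (Real.exp (ξ * X ω - psi μ (fun ω' => (X ω' : ℝ)) ξ))

noncomputable def covar (ν : Measure Ω) (f g : Ω → ℝ) : ℝ :=
  ∫ ω, (f ω - ∫ x, f x ∂ν) * (g ω - ∫ x, g x ∂ν) ∂ν

/-- `α²_ξ`: variance of the residual of the linear regression of `Y̌_ξ` on `X̌_ξ`. -/
noncomputable def alpha2 (μ : Measure Ω) (X : Ω → ℕ) (Y : Ω → ℝ) (ξ : ℝ) : ℝ :=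
  variance
    (fun ω => (Y ω - ∫ x, Y x ∂(tilt μ X ξ)) -
      covar (tilt μ X ξ) (fun ω' => (X ω' : ℝ)) Y / variance (fun ω' => (X ω' : ℝ)) (tilt μ X ξ) *
        ((X ω : ℝ) - ∫ x, (X x : ℝ) ∂(tilt μ X ξ)))
    (tilt μ X ξ)

lemma taylor_exp_bound' (x : ℝ) :
    ‖Complex.exp (x * Complex.I) - (1 - (x:ℂ)^2/2 + x * Complex.I)‖ ≤ 4 * |x|^3 := by
  set z : ℂ := Complex.exp (x * Complex.I) - (1 - (x:ℂ)^2/2 + x * Complex.I) with hz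
  have hre : z.re = Real.cos x - (1 - x^2/2) := by
    simp [hz, Complex.exp_ofReal_mul_I_re, ← Complex.ofReal_pow]
  have him : z.im = Real.sin x - x := by
    simp [hz, Complex.exp_ofReal_mul_I_im, ← Complex.ofReal_pow]
  rcases le_or_gt |x| 1 with hx | hx
  · have h1 := Real.cos_bound hx
    have h2 := Real.sin_bound hx
    have hb := Complex.norm_le_abs_re_add_abs_im z
    rw [hre, him] at hb
    have hx4 : |x|^4 ≤ |x|^3 := pow_le_pow_of_le_one (abs_nonneg x) hx (by norm_num)
    have h3 : |Real.sin x - x| ≤ |x|^4 * (5/96) + |x|^3/6 := by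
      have e : Real.sin x - x = (Real.sin x - (x - x^3/6)) + (-(x^3/6)) := by ring
      rw [e]
      refine (abs_add_le _ _).trans ?_
      have : |(-(x^3/6))| = |x|^3/6 := by
        rw [abs_neg, abs_div, abs_pow]; norm_num
      rw [this]
      have hx5 : |x|^5 ≤ |x|^4 := pow_le_pow_of_le_one (abs_nonneg x) hx (by norm_num)
      have h0' : 0 ≤ |x|^4 := by positivity
      linarith
    have h0 : 0 ≤ |x|^3 := by positivity
    calc ‖z‖ ≤ |Real.cos x - (1 - x^2/2)| + |Real.sin x - x| := hb
      _ ≤ |x|^4 * (5/96) + (|x|^4 * (5/96) + |x|^3/6) := by gcongr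
      _ ≤ 4 * |x|^3 := by nlinarith
  · have h1 : ‖(1:ℂ) - (x:ℂ)^2/2 + x * Complex.I‖ ≤ (1 + x^2/2) + |x| := by
      refine (norm_add_le _ _).trans ?_
      have e1 : ‖(1:ℂ) - (x:ℂ)^2/2‖ ≤ 1 + x^2/2 := by
        rw [show (1:ℂ) - (x:ℂ)^2/2 = ((1 - x^2/2 : ℝ) : ℂ) by push_cast; ring,
          Complex.norm_real, Real.norm_eq_abs]
        rw [abs_le]; constructor <;> nlinarith [sq_nonneg x]
      have e2 : ‖(x:ℂ) * Complex.I‖ = |x| := by simp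
      rw [e2]; gcongr
    have h2 : ‖z‖ ≤ 1 + ((1 + x^2/2) + |x|) := by
      have h3 := norm_sub_le (Complex.exp (x * Complex.I)) (1 - (x:ℂ)^2/2 + x * Complex.I)
      rw [hz]
      refine h3.trans ?_
      rw [Complex.norm_exp_ofReal_mul_I]
      gcongr
    have hA : (1:ℝ) < |x| := hx
    nlinarith [sq_abs x, abs_nonneg x, h2]


set_option maxHeartbeats 1000000 in
/-- **Quadratic bound on the centered characteristic functions** (step in the proof of the
local limit lemma): there exist `δ ∈ (0,π)` and `N` such that for `n ≥ N` and `|t| < δ`,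
`|E[e^{it(Z^(n) − p_n/q_n)}]| ≤ 1 − σ_Z² t²/4`. -/
theorem charFun_quadratic_bound
    {Ω : Type*} [MeasurableSpace Ω] (μ : Measure Ω) [IsProbabilityMeasure μ]
    (Z : Ω → ℕ) (Zn : ℕ → Ω → ℕ)
    (p q : ℕ) (pn qn : ℕ → ℕ)
    (hZ : Measurable Z) (hZn : ∀ n, Measurable (Zn n))
    (hp : 0 < p) (hq : 0 < q) (hpn : ∀ n, 0 < pn n) (hqn : ∀ n, 0 < qn n)
    (hnc : ¬ ∃ c : ℕ, μ {ω | Z ω = c} = 1)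
    (hL2 : MemLp (fun ω => (Z ω : ℝ)) 2 μ)
    (hspanZ : span μ Z = 1) (hspanZn : ∀ n, span μ (Zn n) = 1)
    (hcf : Tendsto (fun n => ⨆ t : ℝ, norm
        ((∫ ω, Complex.exp ((t : ℂ) * (Zn n ω : ℂ) * Complex.I) ∂μ) -
          ∫ ω, Complex.exp ((t : ℂ) * (Z ω : ℂ) * Complex.I) ∂μ)) atTop (𝓝 0))
    (hmean : ∫ ω, (Z ω : ℝ) ∂μ = (p : ℝ) / q)
    (hmeann : ∀ n, ∫ ω, (Zn n ω : ℝ) ∂μ = (pn n : ℝ) / qn n)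
    (hconv : Tendsto (fun n => (pn n : ℝ) / qn n) atTop (𝓝 ((p : ℝ) / q)))
    (hvar : Tendsto (fun n => variance (fun ω => (Zn n ω : ℝ)) μ) atTop
      (𝓝 (variance (fun ω => (Z ω : ℝ)) μ)))
    (hthird : ∃ C : ℝ≥0∞, C ≠ ⊤ ∧ ∀ n,
      (∫⁻ ω, ENNReal.ofReal (|(Zn n ω : ℝ) - (pn n : ℝ) / qn n| ^ 3) ∂μ) ≤ C) :
    ∃ δ : ℝ, 0 < δ ∧ δ < π ∧ ∃ N : ℕ, ∀ n ≥ N, ∀ t : ℝ, |t| < δ →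
      norm (∫ ω, Complex.exp
          (Complex.I * (t : ℂ) * (((Zn n ω : ℝ) - (pn n : ℝ) / qn n : ℝ) : ℂ)) ∂μ) ≤
        1 - variance (fun ω => (Z ω : ℝ)) μ * t ^ 2 / 4 := by
  classical
  obtain ⟨C, hCtop, hC⟩ := hthird
  set v := variance (fun ω => (Z ω : ℝ)) μ with hvdef
  set c := C.toReal with hcdef
  have hc0 : 0 ≤ c := ENNReal.toReal_nonneg
  have hZm : Measurable (fun ω => (Z ω : ℝ)) := Measurable.of_discrete.comp hZ
  -- positivity of the variance of Z
  have hvpos : 0 < v := by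
    rcases (variance_nonneg (fun ω => (Z ω : ℝ)) μ).lt_or_eq with h | h
    · exact h
    · exfalso
      have hv0 : v = 0 := hvdef.trans h.symm
      have hev : evariance (fun ω => (Z ω : ℝ)) μ = 0 := by
        rw [← hL2.ofReal_variance_eq]
        simp only [← hvdef, hv0, ENNReal.ofReal_zero]
      have hae := (evariance_eq_zero_iff hZm.aemeasurable).mp hev
      rw [Filter.EventuallyEq, ae_iff] at hae
      set m := μ[fun ω => (Z ω : ℝ)] with hm
      have hSm : MeasurableSet {ω | (Z ω : ℝ) = m} := hZm (measurableSet_singleton m)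
      have hS1 : μ {ω | (Z ω : ℝ) = m} = 1 := by
        rw [← prob_compl_eq_zero_iff hSm]
        simpa [Set.compl_setOf] using hae
      obtain ⟨ω₀, hω₀⟩ : {ω | (Z ω : ℝ) = m}.Nonempty :=
        nonempty_of_measure_ne_zero (by rw [hS1]; exact one_ne_zero)
      have hsub : {ω | (Z ω : ℝ) = m} ⊆ {ω | Z ω = Z ω₀} := by
        intro ω hω
        have : (Z ω : ℝ) = (Z ω₀ : ℝ) := by
          rw [Set.mem_setOf_eq] at hω hω₀; rw [hω, hω₀]
        exact_mod_cast this
      exact hnc ⟨Z ω₀, le_antisymm prob_le_one (by rw [← hS1]; exact measure_mono hsub)⟩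
  obtain ⟨W, hWdef⟩ : ∃ W : ℕ → Ω → ℝ,
      W = fun n ω => (Zn n ω : ℝ) - (pn n : ℝ) / qn n := ⟨_, rfl⟩
  have hWm : ∀ n, Measurable (W n) := fun n => by
    rw [hWdef]; exact (Measurable.of_discrete.comp (hZn n)).sub measurable_const
  have h3int : ∀ n, Integrable (fun ω => |W n ω| ^ 3) μ := by
    intro n
    refine ⟨((hWm n).abs.pow_const 3).aestronglyMeasurable, ?_⟩
    have he : ∀ ω, ‖|W n ω| ^ 3‖ₑ = ENNReal.ofReal (|W n ω| ^ 3) := fun ω =>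
      Real.enorm_eq_ofReal (by positivity)
    rw [HasFiniteIntegral]
    calc ∫⁻ ω, ‖|W n ω| ^ 3‖ₑ ∂μ
        = ∫⁻ ω, ENNReal.ofReal (|W n ω| ^ 3) ∂μ := by simp_rw [he]
      _ ≤ C := by rw [hWdef]; exact hC n
      _ < ⊤ := hCtop.lt_top
  have h3le : ∀ n, ∫ ω, |W n ω| ^ 3 ∂μ ≤ c := by
    intro n
    rw [integral_eq_lintegral_of_nonneg_ae (ae_of_all _ fun ω => by positivity)
      ((hWm n).abs.pow_const 3).aestronglyMeasurable]
    refine ENNReal.toReal_mono hCtop ?_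
    rw [hWdef]; exact hC n
  have h1int : ∀ n, Integrable (W n) μ := by
    intro n
    refine Integrable.mono' ((integrable_const 1).add (h3int n))
      (hWm n).aestronglyMeasurable (ae_of_all _ fun ω => ?_)
    rw [Real.norm_eq_abs]
    simp only [Pi.add_apply]
    rcases le_total |W n ω| 1 with h | h
    · have : (0:ℝ) ≤ |W n ω| ^ 3 := by positivity
      linarith
    · have : |W n ω| ≤ |W n ω| ^ 3 := by
        calc |W n ω| = |W n ω| ^ 1 := (pow_one _).symm
          _ ≤ |W n ω| ^ 3 := pow_le_pow_right₀ h (by norm_num)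
      linarith
  have h2int : ∀ n, Integrable (fun ω => (W n ω) ^ 2) μ := by
    intro n
    refine Integrable.mono' ((integrable_const 1).add (h3int n))
      ((hWm n).pow_const 2).aestronglyMeasurable (ae_of_all _ fun ω => ?_)
    rw [Real.norm_eq_abs, abs_pow]
    simp only [Pi.add_apply]
    rcases le_total |W n ω| 1 with h | h
    · have h1 : |W n ω| ^ 2 ≤ 1 := pow_le_one₀ (abs_nonneg _) h
      have : (0:ℝ) ≤ |W n ω| ^ 3 := by positivity
      linarith
    · have : |W n ω| ^ 2 ≤ |W n ω| ^ 3 := pow_le_pow_right₀ h (by norm_num)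
      linarith
  have hZni : ∀ n, Integrable (fun ω => (Zn n ω : ℝ)) μ := by
    intro n
    have h := (h1int n).add (integrable_const ((pn n : ℝ) / qn n))
    have e : (fun ω => (Zn n ω : ℝ)) = fun ω => W n ω + (pn n : ℝ) / qn n := by
      funext ω; rw [hWdef]; ring
    rw [e]; exact h
  have hW0 : ∀ n, ∫ ω, W n ω ∂μ = 0 := by
    intro n
    rw [hWdef]
    rw [integral_sub (hZni n) (integrable_const _), hmeann n, integral_const, probReal_univ]
    simp
  have hvarn : ∀ n, variance (fun ω => (Zn n ω : ℝ)) μ = ∫ ω, (W n ω) ^ 2 ∂μ := by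
    intro n
    have hZnm : Measurable (fun ω => (Zn n ω : ℝ)) := Measurable.of_discrete.comp (hZn n)
    have hm2 : MemLp (fun ω => (Zn n ω : ℝ)) 2 μ := by
      rw [memLp_two_iff_integrable_sq hZnm.aestronglyMeasurable]
      have e : (fun ω => ((Zn n ω : ℝ)) ^ 2)
          = fun ω => ((W n ω) ^ 2 + (2 * ((pn n : ℝ) / qn n)) * W n ω)
            + ((pn n : ℝ) / qn n) ^ 2 := by
        funext ω; rw [hWdef]; ring
      rw [e]
      exact ((h2int n).add ((h1int n).const_mul _)).add (integrable_const _)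
    rw [variance_eq_integral hZnm.aemeasurable]
    have e : ((fun ω => (Zn n ω : ℝ)) - fun _ => μ[fun ω => (Zn n ω : ℝ)]) ^ (2:ℕ)
        = fun ω => (W n ω) ^ 2 := by
      funext ω
      rw [Pi.pow_apply, Pi.sub_apply, hmeann n, hWdef]
    exact congrArg (fun g => ∫ ω, g ω ∂μ) e
  obtain ⟨N, hN⟩ := Metric.tendsto_atTop.mp hvar (v / 4) (by positivity)
  refine ⟨min 1 (min (π/2) (min (Real.sqrt (8/(5*v))) (v/(32*(c+1))))), ?_, ?_, N, ?_⟩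
  · have hpi := Real.pi_pos
    have h1 : (0:ℝ) < Real.sqrt (8/(5*v)) := Real.sqrt_pos.mpr (by positivity)
    have h2 : (0:ℝ) < v/(32*(c+1)) := by positivity
    simp only [lt_min_iff]
    refine ⟨one_pos, by linarith, h1, h2⟩
  · have hpi := Real.pi_pos
    have : min 1 (min (π/2) (min (Real.sqrt (8/(5*v))) (v/(32*(c+1))))) ≤ π/2 :=
      (min_le_right _ _).trans (min_le_left _ _)
    linarith
  · intro n hn t ht
    have ht1 : |t| < 1 := lt_of_lt_of_le ht (min_le_left _ _)
    have hts : |t| < Real.sqrt (8/(5*v)) :=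
      lt_of_lt_of_le ht ((min_le_right _ _).trans ((min_le_right _ _).trans (min_le_left _ _)))
    have htv : |t| < v/(32*(c+1)) :=
      lt_of_lt_of_le ht ((min_le_right _ _).trans ((min_le_right _ _).trans (min_le_right _ _)))
    have ht2 : t ^ 2 < 8/(5*v) := by
      have h := (Real.lt_sqrt (abs_nonneg t)).mp hts
      rwa [sq_abs] at h
    have hdist := hN n hn
    rw [Real.dist_eq, hvarn n] at hdist
    obtain ⟨vn, hvndef⟩ : ∃ vn : ℝ, vn = ∫ ω, (W n ω) ^ 2 ∂μ := ⟨_, rfl⟩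
    rw [← hvndef] at hdist
    have habs2 := abs_lt.mp hdist
    have hvnlb : 3*v/4 ≤ vn := by linarith [habs2.1]
    have hvnub : vn ≤ 5*v/4 := by linarith [habs2.2]
    -- rewrite the integrand
    have hintgr_eq : (∫ ω, Complex.exp
          (Complex.I * (t : ℂ) * (((Zn n ω : ℝ) - (pn n : ℝ) / qn n : ℝ) : ℂ)) ∂μ)
        = ∫ ω, Complex.exp (((t * W n ω : ℝ) : ℂ) * Complex.I) ∂μ := by
      refine integral_congr_ae (ae_of_all _ fun ω => ?_)
      have e : Complex.I * (t : ℂ) * (((Zn n ω : ℝ) - (pn n : ℝ) / qn n : ℝ) : ℂ)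
          = ((t * W n ω : ℝ) : ℂ) * Complex.I := by
        rw [hWdef]; push_cast; ring
      beta_reduce
      rw [e]
    rw [hintgr_eq]
    obtain ⟨f, hf⟩ : ∃ f : Ω → ℂ,
        f = fun ω => Complex.exp (((t * W n ω : ℝ) : ℂ) * Complex.I) := ⟨_, rfl⟩
    obtain ⟨P, hP⟩ : ∃ P : Ω → ℂ, P = fun ω =>
        1 - (((t * W n ω) ^ 2 : ℝ) : ℂ)/2 + ((t * W n ω : ℝ) : ℂ) * Complex.I := ⟨_, rfl⟩
    obtain ⟨R, hR⟩ : ∃ R : Ω → ℂ, R = fun ω => f ω - P ω := ⟨_, rfl⟩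
    rw [← hf]
    have hfm : AEStronglyMeasurable f μ := by
      rw [hf]
      exact (Complex.measurable_exp.comp
        ((Complex.measurable_ofReal.comp
          ((hWm n).const_mul t)).mul_const Complex.I)).aestronglyMeasurable
    have hfi : Integrable f μ := by
      refine Integrable.mono' (integrable_const 1) hfm (ae_of_all _ fun ω => ?_)
      rw [hf]
      rw [Complex.norm_exp_ofReal_mul_I]
    have hsqR : Integrable (fun ω => ((t * W n ω) ^ 2 : ℝ)) μ := by
      have h := (h2int n).const_mul (t ^ 2)
      have e : (fun ω => ((t * W n ω) ^ 2 : ℝ)) = fun ω => t ^ 2 * (W n ω) ^ 2 := by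
        funext ω; ring
      rw [e]; exact h
    have hsq : Integrable (fun ω => (((t * W n ω) ^ 2 : ℝ) : ℂ)) μ := hsqR.ofReal
    have hlinR : Integrable (fun ω => (t * W n ω : ℝ)) μ := (h1int n).const_mul t
    have hlin : Integrable (fun ω => ((t * W n ω : ℝ) : ℂ)) μ := hlinR.ofReal
    have hPi : Integrable P μ := by
      rw [hP]
      exact ((integrable_const 1).sub (hsq.div_const 2)).add (hlin.mul_const Complex.I)
    have hRi : Integrable R μ := by rw [hR]; exact hfi.sub hPi
    have hsplit : ∫ ω, f ω ∂μ = (∫ ω, P ω ∂μ) + ∫ ω, R ω ∂μ := by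
      rw [← integral_add hPi hRi]
      exact integral_congr_ae (ae_of_all _ fun ω => by rw [hR]; ring)
    have hWint : ∫ ω, (t * W n ω : ℝ) ∂μ = 0 := by
      rw [integral_const_mul, hW0 n, mul_zero]
    have hW2int : ∫ ω, ((t * W n ω) ^ 2 : ℝ) ∂μ = t ^ 2 * vn := by
      have e : (fun ω => ((t * W n ω) ^ 2 : ℝ)) = fun ω => t ^ 2 * (W n ω) ^ 2 := by
        funext ω; ring
      rw [e, integral_const_mul, hvndef]
    have hPval : ∫ ω, P ω ∂μ = ((1 - t ^ 2 * vn / 2 : ℝ) : ℂ) := by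
      rw [hP]
      have hPadd1 : Integrable (fun ω => (1:ℂ) - (((t * W n ω) ^ 2 : ℝ) : ℂ)/2) μ :=
        (integrable_const 1).sub (hsq.div_const 2)
      rw [integral_add hPadd1 (hlin.mul_const Complex.I),
        integral_sub (integrable_const 1) (hsq.div_const 2)]
      have e1 : ∫ ω, (((t * W n ω) ^ 2 : ℝ) : ℂ)/2 ∂μ = ((t ^ 2 * vn / 2 : ℝ) : ℂ) := by
        have e1' : ∫ ω, (((t * W n ω) ^ 2 : ℝ) : ℂ) ∂μ = ((t ^ 2 * vn : ℝ) : ℂ) := by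
          rw [← hW2int]; exact Complex.ofRealLI.integral_comp_comm _
        rw [integral_div, e1']
        push_cast; ring
      have e2 : ∫ ω, ((t * W n ω : ℝ) : ℂ) * Complex.I ∂μ = 0 := by
        have h := integral_smul_const (μ := μ) (fun ω => ((t * W n ω : ℝ) : ℂ)) Complex.I
        simp only [smul_eq_mul] at h
        have e2' : ∫ ω, ((t * W n ω : ℝ) : ℂ) ∂μ = ((0:ℝ) : ℂ) := by
          rw [← hWint]; exact Complex.ofRealLI.integral_comp_comm _
        rw [h, e2']
        simp
      rw [e1, e2, integral_const, probReal_univ]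
      simp only [ENNReal.toReal_one, one_smul]
      push_cast; ring
    have htvn : t ^ 2 * vn / 2 ≤ 1 := by
      have h8 : t ^ 2 * (5*v) < 8 := by
        rw [lt_div_iff₀ (by positivity : (0:ℝ) < 5*v)] at ht2
        linarith
      nlinarith [sq_nonneg t, hvpos]
    have hbP : ‖∫ ω, P ω ∂μ‖ = 1 - t ^ 2 * vn / 2 := by
      rw [hPval, Complex.norm_real, Real.norm_eq_abs, abs_of_nonneg (by linarith)]
    have hbR : ‖∫ ω, R ω ∂μ‖ ≤ 4 * |t| ^ 3 * c := by
      refine (norm_integral_le_integral_norm _).trans ?_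
      have hbd : ∀ ω, ‖R ω‖ ≤ 4 * |t| ^ 3 * |W n ω| ^ 3 := by
        intro ω
        have h := taylor_exp_bound' (t * W n ω)
        have e : R ω = Complex.exp ((t * W n ω : ℝ) * Complex.I)
            - (1 - ((t * W n ω : ℝ):ℂ) ^ 2/2 + (t * W n ω : ℝ) * Complex.I) := by
          rw [hR, hf, hP]
          push_cast
          ring
        rw [e]
        refine h.trans (le_of_eq ?_)
        rw [abs_mul, mul_pow]
        ring
      calc ∫ ω, ‖R ω‖ ∂μ ≤ ∫ ω, 4 * |t| ^ 3 * |W n ω| ^ 3 ∂μ :=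
            integral_mono hRi.norm ((h3int n).const_mul _) hbd
        _ = 4 * |t| ^ 3 * ∫ ω, |W n ω| ^ 3 ∂μ := integral_const_mul _ _
        _ ≤ 4 * |t| ^ 3 * c := by
            refine mul_le_mul_of_nonneg_left (h3le n) (by positivity)
    have habs : ‖∫ ω, f ω ∂μ‖ ≤ (1 - t ^ 2 * vn / 2) + 4 * |t| ^ 3 * c := by
      rw [hsplit]
      refine (norm_add_le _ _).trans ?_
      rw [hbP]
      linarith [hbR]
    refine habs.trans ?_
    have h32 : |t| * (32*(c+1)) ≤ v := by
      rw [lt_div_iff₀ (by positivity : (0:ℝ) < 32*(c+1))] at htv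
      linarith
    have h4 : 4*c*|t| ≤ v/8 := by
      nlinarith [abs_nonneg t, hc0]
    have ht3 : |t| ^ 3 = t ^ 2 * |t| := by
      rw [pow_succ, sq_abs]
    rw [ht3]
    have h7 : (4*c*|t|)*t^2 ≤ (v/8)*t^2 := mul_le_mul_of_nonneg_right h4 (sq_nonneg t)
    have h8 : (v/8)*t^2 ≤ (vn/2 - v/4)*t^2 :=
      mul_le_mul_of_nonneg_right (by linarith) (sq_nonneg t)
    nlinarith [h7, h8]
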